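/- Work in ℂ² ⊗ ℂ² ⊗ ℂ² and let λ, μ ∈ ℂ with λ ≠ 0 and λ ≠ μ. Then the linear span S_{P,λ,μ} of the Parthasarathy space S_P together with the van der Monde vectors z_λ and z_μ contains infinitely many distinct one-dimensional subspaces spanned by product vectors; in particular, S_{P,λ,μ} is not a quasi-completely entangled subspace. -/

import Mathlib

noncomputable section

abbrev Q : Type := EuclideanSpace ℂ (Fin 2)
abbrev Q3 : Type := EuclideanSpace ℂ (Fin 2 × Fin 2 × Fin 2)

/-- standard basis vector of ℂ² -/
def ket2 (i : Fin 2) : Q := EuclideanSpace.single i 1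

/-- elementary tensor of three qubit vectors, in ℂ² ⊗ ℂ² ⊗ ℂ² ≅ ℂ⁸ -/
def tp3 (u v w : Q) : Q3 := WithLp.toLp 2 (fun p : Fin 2 × Fin 2 × Fin 2 => u p.1 * v p.2.1 * w p.2.2)

/-- the set of one-dimensional subspaces of `T` spanned by (nonzero) product vectors -/
def prodLines3 (T : Submodule ℂ Q3) : Set (Submodule ℂ Q3) :=
  {L | ∃ ξ : Q3, ξ ≠ 0 ∧ ξ ∈ T ∧ (∃ u v w : Q, ξ = tp3 u v w) ∧ L = Submodule.span ℂ {ξ}}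

/-- the van der Monde vector z_λ = (|0⟩ + λ|1⟩)^{⊗3} -/
def zq3 (lam : ℂ) : Q3 :=
  tp3 (ket2 0 + lam • ket2 1) (ket2 0 + lam • ket2 1) (ket2 0 + lam • ket2 1)

/-- the van der Monde vector z_∞ = |1⟩ ⊗ |1⟩ ⊗ |1⟩ -/
def zq3inf : Q3 := tp3 (ket2 1) (ket2 1) (ket2 1)

/-- the span of all van der Monde vectors -/
def Fq3 : Submodule ℂ Q3 := Submodule.span ℂ (insert zq3inf (Set.range zq3))

/-- the Parthasarathy completely entangled subspace of the three-qubit system -/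
def SPq3 : Submodule ℂ Q3 := Fq3ᗮ

namespace St19

def Ac (c : ℂ) : ℂ := 1 - c + c^2
def Bc (lam mu c : ℂ) : ℂ := 2*lam - c*(lam+mu) + 2*c^2*mu
def Cc (lam mu c : ℂ) : ℂ := lam^2 - c*lam*mu + c^2*mu^2

def uu (lam mu c : ℂ) : Q := WithLp.toLp 2 (fun i : Fin 2 => if i = 0 then 1 + c else lam + c*mu)
def vv (lam mu c d : ℂ) : Q := WithLp.toLp 2 (fun i : Fin 2 => if i = 0 then Bc lam mu c + d else 2 * Cc lam mu c)
def ww (lam mu c d : ℂ) : Q := WithLp.toLp 2 (fun i : Fin 2 => if i = 0 then Bc lam mu c - d else 2 * Cc lam mu c)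

def xi (lam mu c d : ℂ) : Q3 := tp3 (uu lam mu c) (vv lam mu c d) (ww lam mu c d)

def dd (lam mu c : ℂ) : ℂ :=
  (IsAlgClosed.exists_pow_nat_eq ((Bc lam mu c)^2 - 4*(Ac c)*(Cc lam mu c)) zero_lt_two).choose

lemma dd_sq (lam mu c : ℂ) :
    (dd lam mu c)^2 = (Bc lam mu c)^2 - 4*(Ac c)*(Cc lam mu c) :=
  (IsAlgClosed.exists_pow_nat_eq _ zero_lt_two).choose_spec

lemma xi_apply (lam mu c d : ℂ) (p : Fin 2 × Fin 2 × Fin 2) :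
    xi lam mu c d p = uu lam mu c p.1 * vv lam mu c d p.2.1 * ww lam mu c d p.2.2 := rfl

def eta (lam mu c d : ℂ) : Q3 :=
  xi lam mu c d - (4 * Cc lam mu c) • zq3 lam - (4 * Cc lam mu c * c^3) • zq3 mu

lemma zq3_apply (lam : ℂ) (p : Fin 2 × Fin 2 × Fin 2) :
    zq3 lam p = (if p.1 = 0 then 1 else lam) * (if p.2.1 = 0 then 1 else lam) *
      (if p.2.2 = 0 then 1 else lam) := by
  simp [zq3, tp3, ket2, EuclideanSpace.single_apply]
  fin_cases p <;> simp

lemma zq3inf_apply (p : Fin 2 × Fin 2 × Fin 2) :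
    zq3inf p = (if p.1 = 1 then 1 else 0) * (if p.2.1 = 1 then 1 else 0) *
      (if p.2.2 = 1 then 1 else 0) := by
  simp [zq3inf, tp3, ket2, EuclideanSpace.single_apply]

lemma eta_apply (lam mu c d : ℂ) (p : Fin 2 × Fin 2 × Fin 2) :
    eta lam mu c d p = xi lam mu c d p - (4 * Cc lam mu c) * zq3 lam p
      - (4 * Cc lam mu c * c^3) * zq3 mu p := by
  simp [eta, PiLp.sub_apply, PiLp.smul_apply, smul_eq_mul]

lemma inner_inf (lam mu c d : ℂ) :
    (inner ℂ zq3inf (eta lam mu c d) : ℂ) = 0 := by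
  rw [PiLp.inner_apply]
  simp only [RCLike.inner_apply, eta_apply, xi_apply, zq3_apply, zq3inf_apply]
  rw [Fintype.sum_prod_type]
  simp only [Fintype.sum_prod_type, Fin.sum_univ_two]
  norm_num [uu, vv, ww]
  simp only [Bc, Cc]
  ring

lemma inner_z (lam mu c d nu : ℂ) (hd : d^2 = (Bc lam mu c)^2 - 4*(Ac c)*(Cc lam mu c)) :
    (inner ℂ (zq3 nu) (eta lam mu c d) : ℂ) = 0 := by
  rw [PiLp.inner_apply]
  simp only [RCLike.inner_apply, eta_apply, xi_apply, zq3_apply]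
  rw [Fintype.sum_prod_type]
  simp only [Fintype.sum_prod_type, Fin.sum_univ_two]
  norm_num [uu, vv, ww]
  simp only [Ac, Bc, Cc] at hd ⊢
  set s := (starRingEnd ℂ) nu with hs
  linear_combination (-(1+c) - s*(lam+c*mu) - s^2*(2*Cc lam mu c)*0) * hd

end St19

namespace St19

lemma eta_mem (lam mu c d : ℂ) (hd : d^2 = (Bc lam mu c)^2 - 4*(Ac c)*(Cc lam mu c)) :
    eta lam mu c d ∈ SPq3 := by
  rw [SPq3, Submodule.mem_orthogonal]
  intro z hz
  induction hz using Submodule.span_induction with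
  | mem x hx =>
    rcases hx with rfl | ⟨ν, rfl⟩
    · exact inner_inf lam mu c d
    · exact inner_z lam mu c d ν hd
  | zero => simp
  | add x y hx hy ihx ihy => rw [inner_add_left, ihx, ihy, add_zero]
  | smul a x hx ih => rw [inner_smul_left, ih, mul_zero]

lemma xi_mem (lam mu c d : ℂ) (hd : d^2 = (Bc lam mu c)^2 - 4*(Ac c)*(Cc lam mu c)) :
    xi lam mu c d ∈ SPq3 ⊔ Submodule.span ℂ {zq3 lam} ⊔ Submodule.span ℂ {zq3 mu} := by
  have hxi : xi lam mu c d = eta lam mu c d + (4 * Cc lam mu c) • zq3 lam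
      + (4 * Cc lam mu c * c^3) • zq3 mu := by
    simp [eta]; abel
  rw [hxi]
  refine Submodule.add_mem _ (Submodule.add_mem _ ?_ ?_) ?_
  · exact le_sup_left (α := Submodule ℂ Q3) (le_sup_left (α := Submodule ℂ Q3) (eta_mem lam mu c d hd))
  · exact le_sup_left (α := Submodule ℂ Q3) (le_sup_right (α := Submodule ℂ Q3)
      (Submodule.smul_mem _ _ (Submodule.mem_span_singleton_self _)))
  · exact le_sup_right (α := Submodule ℂ Q3)
      (Submodule.smul_mem _ _ (Submodule.mem_span_singleton_self _))

lemma xi_ne_zero (lam mu c d : ℂ) (hC : Cc lam mu c ≠ 0) (hu : lam + c*mu ≠ 0) :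
    xi lam mu c d ≠ 0 := by
  intro h
  have h111 : xi lam mu c d (1,1,1) = 0 := by rw [h]; rfl
  rw [xi_apply] at h111
  simp only [uu, vv, ww] at h111
  norm_num at h111
  tauto

end St19

namespace St19

lemma k0 (lam mu c d : ℂ) (hd : d^2 = (Bc lam mu c)^2 - 4*(Ac c)*(Cc lam mu c)) :
    xi lam mu c d (0,0,0) = 4 * Cc lam mu c * (1 + c^3) := by
  rw [xi_apply]
  simp only [uu, vv, ww]
  norm_num
  simp only [Ac, Bc, Cc] at hd ⊢
  linear_combination (-(1+c)) * hd

lemma k1 (lam mu c d : ℂ) (hd : d^2 = (Bc lam mu c)^2 - 4*(Ac c)*(Cc lam mu c)) :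
    xi lam mu c d (0,0,1) + xi lam mu c d (0,1,0) + xi lam mu c d (1,0,0)
      = 12 * Cc lam mu c * (lam + c^3 * mu) := by
  simp only [xi_apply]
  simp only [uu, vv, ww]
  norm_num
  simp only [Ac, Bc, Cc] at hd ⊢
  linear_combination (-(lam + c*mu)) * hd

lemma cube_eq (lam mu c d c' d' t : ℂ)
    (hd : d^2 = (Bc lam mu c)^2 - 4*(Ac c)*(Cc lam mu c))
    (hd' : d'^2 = (Bc lam mu c')^2 - 4*(Ac c')*(Cc lam mu c'))
    (hlm : lam ≠ mu) (hC : Cc lam mu c ≠ 0)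
    (ht : t • xi lam mu c' d' = xi lam mu c d) : c^3 = c'^3 := by
  have hap : ∀ p, xi lam mu c d p = t * xi lam mu c' d' p := by
    intro p
    rw [← ht]
    simp [PiLp.smul_apply, smul_eq_mul]
  have p0 : 4 * Cc lam mu c * (1 + c^3) = t * (4 * Cc lam mu c' * (1 + c'^3)) := by
    rw [← k0 lam mu c d hd, ← k0 lam mu c' d' hd', hap]
  have p1 : 12 * Cc lam mu c * (lam + c^3 * mu)
      = t * (12 * Cc lam mu c' * (lam + c'^3 * mu)) := by
    rw [← k1 lam mu c d hd, ← k1 lam mu c' d' hd', hap, hap, hap]; ring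
  have hml : mu - lam ≠ 0 := sub_ne_zero.2 (Ne.symm hlm)
  have key : (Cc lam mu c - t * Cc lam mu c') * (mu - lam) = 0 := by
    linear_combination (mu/4) * p0 - (1/12) * p1
  have hCt : Cc lam mu c = t * Cc lam mu c' := by
    rcases mul_eq_zero.1 key with h | h
    · exact sub_eq_zero.1 h
    · exact absurd h hml
  have key2 : (Cc lam mu c * c^3 - t * Cc lam mu c' * c'^3) * (mu - lam) = 0 := by
    linear_combination (1/12) * p1 - (lam/4) * p0
  have h2 : Cc lam mu c * c^3 = Cc lam mu c * c'^3 := by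
    rcases mul_eq_zero.1 key2 with h | h
    · rw [← hCt] at h; linear_combination h
    · exact absurd h hml
  exact mul_left_cancel₀ hC h2

end St19

namespace St19

open Polynomial in
lemma bad_finite (lam mu : ℂ) (h0 : lam ≠ 0) :
    {n : ℕ | Cc lam mu (n : ℂ) = 0 ∨ lam + (n : ℂ) * mu = 0}.Finite := by
  by_cases hmu : mu = 0
  · convert Set.finite_empty
    ext n
    simp only [Set.mem_setOf_eq, Set.mem_empty_iff_false, iff_false, not_or]
    subst hmu
    constructor
    · simp only [Cc]; intro h; apply pow_ne_zero 2 h0; linear_combination h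
    · simpa using h0
  · set p : ℂ[X] := (C (mu^2) * X^2 - C (lam*mu) * X + C (lam^2)) * (C mu * X + C lam) with hp
    have hp1 : (C (mu^2) * X^2 - C (lam*mu) * X + C (lam^2) : ℂ[X]) ≠ 0 := by
      intro h
      have h2 : (C (mu^2) * X^2 - C (lam*mu) * X + C (lam^2) : ℂ[X]).coeff 2 = 0 := by
        rw [h]; simp
      simp only [coeff_add, coeff_sub, coeff_C_mul, coeff_X_pow, coeff_C, coeff_X] at h2
      norm_num at h2
      exact hmu h2
    have hp2 : (C mu * X + C lam : ℂ[X]) ≠ 0 := by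
      intro h
      have h2 : (C mu * X + C lam : ℂ[X]).coeff 1 = 0 := by rw [h]; simp
      simp [coeff_C] at h2
      exact hmu h2
    have hpne : p ≠ 0 := mul_ne_zero hp1 hp2
    have hroots : Set.Finite {x : ℂ | p.IsRoot x} := Polynomial.finite_setOf_isRoot hpne
    apply Set.Finite.preimage (f := fun n : ℕ => (n : ℂ)) (Set.injOn_of_injective Nat.cast_injective) hroots
      |>.subset
    intro n hn
    simp only [Set.mem_preimage, Set.mem_setOf_eq, IsRoot.def, hp] at hn ⊢
    simp only [eval_mul, eval_add, eval_sub, eval_C, eval_X, eval_pow]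
    rcases hn with h | h
    · simp only [Cc] at h
      linear_combination (mu * (n:ℂ) + lam) * h
    · linear_combination (mu^2 * (n:ℂ)^2 - lam * mu * (n:ℂ) + lam^2) * h

end St19

open St19 in
theorem statement19 (lam mu : ℂ) (h0 : lam ≠ 0) (hne : lam ≠ mu) :
    (prodLines3 (SPq3 ⊔ Submodule.span ℂ {zq3 lam} ⊔ Submodule.span ℂ {zq3 mu})).Infinite := by
  classical
  have hfin := bad_finite lam mu h0
  have hSinf : {n : ℕ | Cc lam mu (n : ℂ) = 0 ∨ lam + (n : ℂ) * mu = 0}ᶜ.Infinite :=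
    hfin.infinite_compl
  haveI : Infinite ↥{n : ℕ | Cc lam mu (n : ℂ) = 0 ∨ lam + (n : ℂ) * mu = 0}ᶜ :=
    hSinf.to_subtype
  have hgood : ∀ n : ↥{n : ℕ | Cc lam mu (n : ℂ) = 0 ∨ lam + (n : ℂ) * mu = 0}ᶜ,
      Cc lam mu ((n : ℕ) : ℂ) ≠ 0 ∧ lam + ((n : ℕ) : ℂ) * mu ≠ 0 := by
    intro n
    have := n.2
    simp only [Set.mem_compl_iff, Set.mem_setOf_eq, not_or] at this
    exact this
  apply Set.infinite_of_injective_forall_mem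
    (f := fun n : ↥{n : ℕ | Cc lam mu (n : ℂ) = 0 ∨ lam + (n : ℂ) * mu = 0}ᶜ =>
      Submodule.span ℂ {xi lam mu ((n : ℕ) : ℂ) (dd lam mu ((n : ℕ) : ℂ))})
  · intro n m h
    simp only at h
    have hx : xi lam mu ((n : ℕ) : ℂ) (dd lam mu ((n : ℕ) : ℂ)) ∈
        Submodule.span ℂ {xi lam mu ((m : ℕ) : ℂ) (dd lam mu ((m : ℕ) : ℂ))} :=
      h ▸ Submodule.mem_span_singleton_self _
    obtain ⟨t, ht⟩ := Submodule.mem_span_singleton.1 hx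
    have hcube : ((n : ℕ) : ℂ)^3 = ((m : ℕ) : ℂ)^3 :=
      cube_eq lam mu _ _ _ _ t (dd_sq lam mu _) (dd_sq lam mu _) hne (hgood n).1 ht
    have hnat : (n : ℕ)^3 = (m : ℕ)^3 := by exact_mod_cast hcube
    exact Subtype.ext (Nat.pow_left_injective (by norm_num) hnat)
  · intro n
    exact ⟨xi lam mu ((n : ℕ) : ℂ) (dd lam mu ((n : ℕ) : ℂ)),
      xi_ne_zero lam mu _ _ (hgood n).1 (hgood n).2,
      xi_mem lam mu _ _ (dd_sq lam mu _),
      ⟨uu lam mu _, vv lam mu _ _, ww lam mu _ _, rfl⟩, rfl⟩
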